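/- arXiv:0712.3327 — 5 statements merged into one kernel-verified Lean document; each statement's English description precedes it below -/
import Mathlib

section
/- The region R_BZT(p,q) defined for parameters p,q ∈ [0,1] by R₀ ≤ min{p/6 + q/2, p} and R₁ ≤ (1−p)/2 + (1−q) contains the point (R₀, R₁) = (1/2, 5/12), and for every p, q ∈ [0,1], if R₀ = 1/2 is feasible then R₁ ≤ 5/12; i.e., (1/2, 5/12) is on the boundary. -/
/-- The BZT rate region of the erasure example: union over `p, q ∈ [0,1]` of the
rectangles `{(R₀,R₁) ∈ ℝ≥0² : R₀ ≤ min (p/6 + q/2) p, R₁ ≤ (1-p)/2 + (1-q)}`. -/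
def BZTregion : Set (ℝ × ℝ) :=
  {R | ∃ p q : ℝ, p ∈ Set.Icc (0:ℝ) 1 ∧ q ∈ Set.Icc (0:ℝ) 1 ∧
    0 ≤ R.1 ∧ 0 ≤ R.2 ∧ R.1 ≤ min (p/6 + q/2) p ∧ R.2 ≤ (1-p)/2 + (1-q)}

/-- `(1/2, 5/12)` lies in the BZT region, and whenever `R₀ = 1/2` is feasible for
parameters `(p,q)`, the corresponding bound on `R₁` is at most `5/12`; i.e.
`(1/2, 5/12)` is on the boundary. -/
theorem bzt_boundary_point :
    ((1/2 : ℝ), (5/12 : ℝ)) ∈ BZTregion ∧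
    ∀ p q : ℝ, p ∈ Set.Icc (0:ℝ) 1 → q ∈ Set.Icc (0:ℝ) 1 →
      (1/2 : ℝ) ≤ min (p/6 + q/2) p → (1-p)/2 + (1-q) ≤ 5/12 := by
  constructor
  · exact ⟨1/2, 5/6, by norm_num, by norm_num, by norm_num, by norm_num,
      by norm_num, by norm_num⟩
  · intro p q _ _ h
    have h1 := le_min_iff.mp h
    obtain ⟨h2, h3⟩ := h1
    linarith
end

section
/- The region C(r,s,t) defined for parameters 0 ≤ r ≤ t ≤ 1 and 0 ≤ s ≤ 1 by R₀ ≤ min{r/6 + s/2, t} and R₀ + R₁ ≤ min{r/6 + s/2 + (1−r)/2 + (1−s), t + (1−t)/2 + (1−s)} contains the point (R₀, R₁) = (1/2, 1/2) (achieved at r = 0, s = 1, t = 1), which lies strictly outside the region ∪_{p,q∈[0,1]} {(R₀,R₁) : R₀ ≤ min(p/6 + q/2, p), R₁ ≤ (1−p)/2 + 1−q}. -/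
/-- The capacity region of the erasure example: union over `0 ≤ r ≤ t ≤ 1`,
`0 ≤ s ≤ 1` of the sets `C(r,s,t)`. -/
def CapRegion : Set (ℝ × ℝ) :=
  {R | ∃ r s t : ℝ, 0 ≤ r ∧ r ≤ t ∧ t ≤ 1 ∧ 0 ≤ s ∧ s ≤ 1 ∧
    0 ≤ R.1 ∧ 0 ≤ R.2 ∧ R.1 ≤ min (r/6 + s/2) t ∧
    R.1 + R.2 ≤ min (r/6 + s/2 + (1-r)/2 + (1-s)) (t + (1-t)/2 + (1-s))}

/-- `(1/2, 1/2)` is in the capacity region (achieved at `r = 0, s = 1, t = 1`)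
but strictly outside the BZT region. -/
theorem cap_point_outside_bzt :
    ((1/2 : ℝ), (1/2 : ℝ)) ∈ CapRegion ∧ ((1/2 : ℝ), (1/2 : ℝ)) ∉ BZTregion := by
  constructor
  · exact ⟨0, 1, 1, by norm_num⟩
  · rintro ⟨p, q, ⟨hp0, hp1⟩, ⟨hq0, hq1⟩, -, -, h1, h2⟩
    simp only [le_min_iff] at h1
    obtain ⟨h1a, h1b⟩ := h1
    nlinarith
end

section
/- The boundary of the region ∪_{p,q∈[0,1]}{(R₀,R₁) ∈ ℝ≥0² : R₀ ≤ min(p/6 + q/2, p), R₁ ≤ (1−p)/2 + 1−q} consists of the two line segments joining (0, 3/2) to (0.6, 0.2) and joining (0.6, 0.2) to (2/3, 0); equivalently this union equals {(R₀,R₁) ∈ ℝ≥0² : R₁ ≤ 3/2 − (13/6)R₀ or below the corresponding segments}, namely the convex region with vertices (0,0), (2/3,0), (0.6,0.2), (0,3/2). -/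
/-- The BZT region is the convex polygon with vertices
`(0,0)`, `(2/3,0)`, `(3/5,1/5)`, `(0,3/2)` (intersected with the nonnegative
quadrant); its boundary consists of the segments joining `(0, 3/2)` to
`(0.6, 0.2)` and `(0.6, 0.2)` to `(2/3, 0)`. -/
theorem bzt_region_eq_polygon :
    BZTregion =
      convexHull ℝ ({((0:ℝ),(0:ℝ)), ((2/3:ℝ),(0:ℝ)), ((3/5:ℝ),(1/5:ℝ)),
          ((0:ℝ),(3/2:ℝ))} : Set (ℝ × ℝ))
        ∩ {R : ℝ × ℝ | 0 ≤ R.1 ∧ 0 ≤ R.2} := by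
  have hSconv : Convex ℝ {R : ℝ × ℝ | 0 ≤ R.1 ∧ 0 ≤ R.2 ∧
      3*R.1 + R.2 ≤ 2 ∧ 13*R.1 + 6*R.2 ≤ 9} := by
    rintro ⟨u1, u2⟩ ⟨hu1, hu2, hu3, hu4⟩ ⟨v1, v2⟩ ⟨hv1, hv2, hv3, hv4⟩ a b ha hb hab
    simp only [Prod.smul_mk, Prod.mk_add_mk, smul_eq_mul, Set.mem_setOf_eq]
    refine ⟨by nlinarith, by nlinarith, by nlinarith, by nlinarith⟩
  ext ⟨x, y⟩
  simp only [BZTregion, Set.mem_setOf_eq, Set.mem_inter_iff, Set.mem_Icc]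
  constructor
  · rintro ⟨p, q, ⟨hp0, hp1⟩, ⟨hq0, hq1⟩, hx, hy, hxm, hym⟩
    rw [le_min_iff] at hxm
    obtain ⟨hx1, hx2⟩ := hxm
    have h1 : 3*x + y ≤ 2 := by linarith
    have h2 : 13*x + 6*y ≤ 9 := by linarith
    refine ⟨?_, hx, hy⟩
    -- build convex combination
    set c : ℝ := max 0 (45*x + 20*y - 30) with hc
    have hc0 : 0 ≤ c := le_max_left _ _
    have hcge : 45*x + 20*y - 30 ≤ c := le_max_right _ _
    have hc1 : c ≤ 5*x/3 := max_le (by linarith) (by linarith)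
    have hc2 : c ≤ 5*y := max_le (by linarith) (by linarith)
    set d : ℝ := 2*y/3 - 2*c/15 with hd
    set b : ℝ := 3*x/2 - 9*c/10 with hb
    set a : ℝ := 1 - b - c - d with ha
    have hb0 : 0 ≤ b := by rw [hb]; linarith
    have hd0 : 0 ≤ d := by rw [hd]; linarith
    have ha0 : 0 ≤ a := by rw [ha, hb, hd]; linarith
    have hsum : a + b + c + d = 1 := by rw [ha]; ring
    have hcm : (Finset.univ : Finset (Fin 4)).centerMass ![a, b, c, d]
        ![((0:ℝ),(0:ℝ)), ((2/3:ℝ),(0:ℝ)), ((3/5:ℝ),(1/5:ℝ)), ((0:ℝ),(3/2:ℝ))] = (x, y) := by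
      rw [Finset.centerMass]
      simp only [Fin.sum_univ_four, Matrix.cons_val_zero, Matrix.cons_val_one, Matrix.head_cons,
        Matrix.cons_val_two, Matrix.tail_cons, Matrix.cons_val_three]
      rw [show a + b + c + d = 1 from hsum]
      simp only [inv_one, one_smul, Prod.smul_mk, smul_eq_mul, Prod.mk_add_mk, Prod.mk.injEq]
      constructor
      · rw [hb]; ring
      · rw [hd]; ring
    rw [← hcm]
    exact Finset.centerMass_mem_convexHull (Finset.univ : Finset (Fin 4))
      (fun i _ => by fin_cases i <;> simpa using ‹_›)
      (by simp [Fin.sum_univ_four]; linarith)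
      (fun i _ => by fin_cases i <;> simp)
  · rintro ⟨hhull, hx, hy⟩
    have hS : (x, y) ∈ {R : ℝ × ℝ | 0 ≤ R.1 ∧ 0 ≤ R.2 ∧
        3*R.1 + R.2 ≤ 2 ∧ 13*R.1 + 6*R.2 ≤ 9} := by
      refine convexHull_min ?_ hSconv hhull
      intro z hz
      simp only [Set.mem_insert_iff, Set.mem_singleton_iff] at hz
      rcases hz with h | h | h | h <;> subst h <;> norm_num
    obtain ⟨-, -, h1, h2⟩ := hS
    set p : ℝ := min 1 (min (3 - 2*y) (9 - 12*x - 6*y)) with hp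
    have hp0 : 0 ≤ p := le_min (by norm_num) (le_min (by linarith) (by linarith))
    have hp1 : p ≤ 1 := min_le_left _ _
    have hpa : p ≤ 3 - 2*y := le_trans (min_le_right _ _) (min_le_left _ _)
    have hpb : p ≤ 9 - 12*x - 6*y := le_trans (min_le_right _ _) (min_le_right _ _)
    have hpx : x ≤ p := le_min (by linarith) (le_min (by linarith) (by linarith))
    have hp63 : 6*x - 3 ≤ p := le_min (by linarith) (le_min (by linarith) (by linarith))
    set q : ℝ := max 0 (2*x - p/3) with hq
    have hq0 : 0 ≤ q := le_max_left _ _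
    have hq1 : q ≤ 1 := max_le (by norm_num) (by linarith)
    have hq2 : 2*x - p/3 ≤ q := le_max_right _ _
    have hq3 : q ≤ 3/2 - p/2 - y := max_le (by linarith) (by linarith)
    exact ⟨p, q, ⟨hp0, hp1⟩, ⟨hq0, hq1⟩, hx, hy,
      le_min (by linarith) hpx, by linarith⟩
end

section
/- Let U₁ → U₂ → X → (Y₁, Y₂) be finitely-valued random variables with U₁ → U₂ → X a Markov chain. Then I(U₂; Y₂ | U₁) + I(U₃; Y₃) − I(U₂; U₃ | U₁) ≤ I(U₃; Y₃) + I(X; Y₂ | U₃) whenever also U₁ → U₃ → (U₂, X) is a Markov chain, where all variables are jointly distributed with the channel outputs; equivalently I(U₂; Y₂ | U₁) − I(U₂; U₃ | U₁) ≤ I(X; Y₂ | U₃). -/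
open Real BigOperators Finset

noncomputable section

/-- Probability that a random variable `X` takes value `a`, under weight function `μ`. -/
def prob {Ω : Type*} [Fintype Ω] {A : Type*} [DecidableEq A]
    (μ : Ω → ℝ) (X : Ω → A) (a : A) : ℝ :=
  ∑ ω, if X ω = a then μ ω else 0

/-- Shannon entropy (natural log) of a finitely-valued random variable. -/
def Hent {Ω : Type*} [Fintype Ω] {A : Type*} [Fintype A] [DecidableEq A]
    (μ : Ω → ℝ) (X : Ω → A) : ℝ :=
  ∑ a, Real.negMulLog (prob μ X a)

/-- Mutual information `I(X;Y)`. -/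
def MI {Ω : Type*} [Fintype Ω] {A B : Type*} [Fintype A] [DecidableEq A]
    [Fintype B] [DecidableEq B] (μ : Ω → ℝ) (X : Ω → A) (Y : Ω → B) : ℝ :=
  Hent μ X + Hent μ Y - Hent μ (fun ω => (X ω, Y ω))

/-- Conditional mutual information `I(X;Y|Z)`. -/
def CMI {Ω : Type*} [Fintype Ω] {A B C : Type*} [Fintype A] [DecidableEq A]
    [Fintype B] [DecidableEq B] [Fintype C] [DecidableEq C]
    (μ : Ω → ℝ) (X : Ω → A) (Y : Ω → B) (Z : Ω → C) : ℝ :=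
  Hent μ (fun ω => (X ω, Z ω)) + Hent μ (fun ω => (Y ω, Z ω))
    - Hent μ (fun ω => (X ω, Y ω, Z ω)) - Hent μ Z

/-- `μ` is a probability mass function on the finite sample space `Ω`. -/
def IsProbMeasure {Ω : Type*} [Fintype Ω] (μ : Ω → ℝ) : Prop :=
  (∀ ω, 0 ≤ μ ω) ∧ ∑ ω, μ ω = 1

/-- `X → Y → Z` forms a Markov chain: `X` and `Z` are conditionally independent given `Y`. -/
def Markov {Ω : Type*} [Fintype Ω] {A B C : Type*} [DecidableEq A]
    [DecidableEq B] [DecidableEq C]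
    (μ : Ω → ℝ) (X : Ω → A) (Y : Ω → B) (Z : Ω → C) : Prop :=
  ∀ a b c, prob μ (fun ω => (X ω, Y ω, Z ω)) (a, b, c) * prob μ Y b
    = prob μ (fun ω => (X ω, Y ω)) (a, b) * prob μ (fun ω => (Y ω, Z ω)) (b, c)

end

section Aux
set_option linter.unusedSectionVars false

variable {Ω : Type*} [Fintype Ω] {A B C D : Type*} [Fintype A] [DecidableEq A]
  [Fintype B] [DecidableEq B] [Fintype C] [DecidableEq C] [Fintype D] [DecidableEq D]
  (μ : Ω → ℝ)

lemma prob_nonneg (hpos : ∀ ω, 0 ≤ μ ω) (X : Ω → A) (a : A) : 0 ≤ prob μ X a := by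
  apply Finset.sum_nonneg; intro ω _; split <;> simp [hpos ω]

lemma sum_prob (X : Ω → A) : ∑ a, prob μ X a = ∑ ω, μ ω := by
  simp only [prob]
  rw [Finset.sum_comm]
  simp

lemma prob_comp_inj (e : A → B) (he : Function.Injective e) (T : Ω → A) (a : A) :
    prob μ (fun ω => e (T ω)) (e a) = prob μ T a := by
  unfold prob
  exact Finset.sum_congr rfl fun ω _ => by simp [he.eq_iff]

lemma marg_mid (X : Ω → A) (Y : Ω → B) (Z : Ω → C) (x : A) (z : C) :
    ∑ y, prob μ (fun ω => (X ω, Y ω, Z ω)) (x, y, z)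
      = prob μ (fun ω => (X ω, Z ω)) (x, z) := by
  simp only [prob]
  rw [Finset.sum_comm]
  apply Finset.sum_congr rfl
  intro ω _
  by_cases hx : X ω = x <;> by_cases hz : Z ω = z <;> simp [hx, hz, Prod.ext_iff]

lemma marg_fst (X : Ω → A) (Y : Ω → B) (Z : Ω → C) (y : B) (z : C) :
    ∑ x, prob μ (fun ω => (X ω, Y ω, Z ω)) (x, y, z)
      = prob μ (fun ω => (Y ω, Z ω)) (y, z) := by
  simp only [prob]
  rw [Finset.sum_comm]
  apply Finset.sum_congr rfl
  intro ω _
  by_cases hy : Y ω = y <;> by_cases hz : Z ω = z <;> simp [hy, hz, Prod.ext_iff]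

lemma marg_pair (X : Ω → A) (Z : Ω → C) (z : C) :
    ∑ x, prob μ (fun ω => (X ω, Z ω)) (x, z) = prob μ Z z := by
  simp only [prob]
  rw [Finset.sum_comm]
  apply Finset.sum_congr rfl
  intro ω _
  by_cases hz : Z ω = z <;> simp [hz, Prod.ext_iff]

lemma Hent_comp_inj (e : A → B) (he : Function.Injective e) (T : Ω → A) :
    Hent μ (fun ω => e (T ω)) = Hent μ T := by
  unfold Hent
  have h1 : ∑ a, Real.negMulLog (prob μ T a)
      = ∑ a, Real.negMulLog (prob μ (fun ω => e (T ω)) (e a)) :=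
    Finset.sum_congr rfl fun a _ => by rw [prob_comp_inj μ e he T a]
  rw [h1, ← Finset.sum_image (s := Finset.univ)
    (f := fun b => Real.negMulLog (prob μ (fun ω => e (T ω)) b)) (g := e)
    (fun a _ b _ h => he h)]
  apply (Finset.sum_subset (Finset.subset_univ _) ?_).symm
  intro b _ hb
  simp only [Finset.mem_image, Finset.mem_univ, true_and, not_exists] at hb
  have : prob μ (fun ω => e (T ω)) b = 0 := by
    apply Finset.sum_eq_zero
    intro ω _
    simp [hb (T ω)]
  simp [this]

lemma CMI_congr {A' B' C' : Type*} [Fintype A'] [DecidableEq A']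
    [Fintype B'] [DecidableEq B'] [Fintype C'] [DecidableEq C']
    (eA : A → A') (eB : B → B') (eC : C → C')
    (hA : Function.Injective eA) (hB : Function.Injective eB) (hC : Function.Injective eC)
    {X : Ω → A} {X' : Ω → A'} {Y : Ω → B} {Y' : Ω → B'} {Z : Ω → C} {Z' : Ω → C'}
    (hX : ∀ ω, X' ω = eA (X ω)) (hY : ∀ ω, Y' ω = eB (Y ω)) (hZ : ∀ ω, Z' ω = eC (Z ω)) :
    CMI μ X' Y' Z' = CMI μ X Y Z := by
  obtain rfl : X' = fun ω => eA (X ω) := funext hX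
  obtain rfl : Y' = fun ω => eB (Y ω) := funext hY
  obtain rfl : Z' = fun ω => eC (Z ω) := funext hZ
  have h1 : Hent μ (fun ω => (eA (X ω), eC (Z ω))) = Hent μ (fun ω => (X ω, Z ω)) :=
    Hent_comp_inj μ (Prod.map eA eC) (hA.prodMap hC) (fun ω => (X ω, Z ω))
  have h2 : Hent μ (fun ω => (eB (Y ω), eC (Z ω))) = Hent μ (fun ω => (Y ω, Z ω)) :=
    Hent_comp_inj μ (Prod.map eB eC) (hB.prodMap hC) (fun ω => (Y ω, Z ω))
  have h3 : Hent μ (fun ω => (eA (X ω), eB (Y ω), eC (Z ω)))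
      = Hent μ (fun ω => (X ω, Y ω, Z ω)) :=
    Hent_comp_inj μ (Prod.map eA (Prod.map eB eC)) (hA.prodMap (hB.prodMap hC)) (fun ω => (X ω, Y ω, Z ω))
  have h4 : Hent μ (fun ω => eC (Z ω)) = Hent μ Z := Hent_comp_inj μ eC hC _
  unfold CMI
  rw [h1, h2, h3, h4]

lemma CMI_symm (X : Ω → A) (Y : Ω → B) (Z : Ω → C) :
    CMI μ X Y Z = CMI μ Y X Z := by
  have h : Hent μ (fun ω => (X ω, Y ω, Z ω)) = Hent μ (fun ω => (Y ω, X ω, Z ω)) :=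
    Hent_comp_inj μ (fun p : B × A × C => (p.2.1, p.1, p.2.2))
      (by intro ⟨a, b, c⟩ ⟨d, e, f⟩ h; simp_all [Prod.ext_iff]) (fun ω => (Y ω, X ω, Z ω))
  unfold CMI
  rw [h]
  ring

lemma CMI_chain (X : Ω → A) (Y : Ω → B) (W : Ω → D) (Z : Ω → C) :
    CMI μ X (fun ω => (Y ω, W ω)) Z
      = CMI μ X W Z + CMI μ X Y (fun ω => (W ω, Z ω)) := by
  have h1 : Hent μ (fun ω => (Y ω, W ω, Z ω)) = Hent μ (fun ω => ((Y ω, W ω), Z ω)) :=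
    Hent_comp_inj μ (fun p : (B × D) × C => (p.1.1, p.1.2, p.2))
      (by intro ⟨⟨a, b⟩, c⟩ ⟨⟨d, e⟩, f⟩ h; simp_all [Prod.ext_iff]) (fun ω => ((Y ω, W ω), Z ω))
  have h2 : Hent μ (fun ω => (X ω, Y ω, W ω, Z ω))
      = Hent μ (fun ω => (X ω, (Y ω, W ω), Z ω)) :=
    Hent_comp_inj μ (fun p : A × (B × D) × C => (p.1, p.2.1.1, p.2.1.2, p.2.2))
      (by intro ⟨a, ⟨b, c⟩, d⟩ ⟨e, ⟨f, g⟩, h⟩ hh; simp_all [Prod.ext_iff]) (fun ω => (X ω, (Y ω, W ω), Z ω))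
  unfold CMI
  rw [← h1, ← h2]
  ring

lemma neg_mul_log_expand {ι : Type*} {s : Finset ι} {f : ι → ℝ} {t c : ℝ}
    (h : t = ∑ i ∈ s, f i) :
    -(t * Real.log c) = ∑ i ∈ s, -(f i * Real.log c) := by
  subst h
  rw [Finset.sum_mul, Finset.sum_neg_distrib]

lemma CMI_eq_sum (X : Ω → A) (Y : Ω → B) (Z : Ω → C) :
    CMI μ X Y Z = ∑ z, ∑ x, ∑ y,
      prob μ (fun ω => (X ω, Y ω, Z ω)) (x, y, z) *
        (Real.log (prob μ (fun ω => (X ω, Y ω, Z ω)) (x, y, z))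
          + Real.log (prob μ Z z)
          - Real.log (prob μ (fun ω => (X ω, Z ω)) (x, z))
          - Real.log (prob μ (fun ω => (Y ω, Z ω)) (y, z))) := by
  have e1 : Hent μ (fun ω => (X ω, Z ω))
      = ∑ z, ∑ x, ∑ y, -(prob μ (fun ω => (X ω, Y ω, Z ω)) (x, y, z)
          * Real.log (prob μ (fun ω => (X ω, Z ω)) (x, z))) := by
    unfold Hent
    rw [Fintype.sum_prod_type, Finset.sum_comm]
    refine Finset.sum_congr rfl fun z _ => Finset.sum_congr rfl fun x _ => ?_
    rw [Real.negMulLog, neg_mul]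
    exact neg_mul_log_expand (marg_mid μ X Y Z x z).symm
  have e2 : Hent μ (fun ω => (Y ω, Z ω))
      = ∑ z, ∑ x, ∑ y, -(prob μ (fun ω => (X ω, Y ω, Z ω)) (x, y, z)
          * Real.log (prob μ (fun ω => (Y ω, Z ω)) (y, z))) := by
    unfold Hent
    rw [Fintype.sum_prod_type, Finset.sum_comm]
    refine Finset.sum_congr rfl fun z _ => ?_
    rw [show (∑ y, Real.negMulLog (prob μ (fun ω => (Y ω, Z ω)) (y, z)))
        = ∑ y, ∑ x, -(prob μ (fun ω => (X ω, Y ω, Z ω)) (x, y, z)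
          * Real.log (prob μ (fun ω => (Y ω, Z ω)) (y, z))) from
      Finset.sum_congr rfl fun y _ => by
        rw [Real.negMulLog, neg_mul]
        exact neg_mul_log_expand (marg_fst μ X Y Z y z).symm]
    exact Finset.sum_comm
  have e3 : Hent μ Z
      = ∑ z, ∑ x, ∑ y, -(prob μ (fun ω => (X ω, Y ω, Z ω)) (x, y, z)
          * Real.log (prob μ Z z)) := by
    unfold Hent
    refine Finset.sum_congr rfl fun z _ => ?_
    rw [Real.negMulLog, neg_mul, neg_mul_log_expand (marg_pair μ X Z z).symm]
    exact Finset.sum_congr rfl fun x _ => neg_mul_log_expand (marg_mid μ X Y Z x z).symm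
  have e4 : Hent μ (fun ω => (X ω, Y ω, Z ω))
      = ∑ z, ∑ x, ∑ y, -(prob μ (fun ω => (X ω, Y ω, Z ω)) (x, y, z)
          * Real.log (prob μ (fun ω => (X ω, Y ω, Z ω)) (x, y, z))) := by
    unfold Hent
    simp only [Fintype.sum_prod_type, Real.negMulLog, neg_mul]
    rw [show (∑ x, ∑ y, ∑ z, -(prob μ (fun ω => (X ω, Y ω, Z ω)) (x, y, z)
          * Real.log (prob μ (fun ω => (X ω, Y ω, Z ω)) (x, y, z))))
        = ∑ x, ∑ z, ∑ y, -(prob μ (fun ω => (X ω, Y ω, Z ω)) (x, y, z)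
          * Real.log (prob μ (fun ω => (X ω, Y ω, Z ω)) (x, y, z))) from
      Finset.sum_congr rfl fun x _ => Finset.sum_comm]
    exact Finset.sum_comm
  unfold CMI
  rw [e1, e2, e3, e4, ← Finset.sum_add_distrib, ← Finset.sum_sub_distrib,
    ← Finset.sum_sub_distrib]
  refine Finset.sum_congr rfl fun z _ => ?_
  rw [← Finset.sum_add_distrib, ← Finset.sum_sub_distrib, ← Finset.sum_sub_distrib]
  refine Finset.sum_congr rfl fun x _ => ?_
  rw [← Finset.sum_add_distrib, ← Finset.sum_sub_distrib, ← Finset.sum_sub_distrib]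
  refine Finset.sum_congr rfl fun y _ => ?_
  ring

lemma CMI_nonneg (hμ : IsProbMeasure μ) (X : Ω → A) (Y : Ω → B) (Z : Ω → C) :
    0 ≤ CMI μ X Y Z := by
  obtain ⟨hpos, hsum⟩ := hμ
  have hZsum : ∑ z, prob μ Z z = 1 := by rw [sum_prob, hsum]
  have h1 : ∀ z, ∑ x, ∑ y, prob μ (fun ω => (X ω, Y ω, Z ω)) (x, y, z) = prob μ Z z :=
    fun z => (Finset.sum_congr rfl fun x _ => marg_mid μ X Y Z x z).trans (marg_pair μ X Z z)
  have h2 : ∀ z, (∑ x, ∑ y, if 0 < prob μ Z z then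
        prob μ (fun ω => (X ω, Z ω)) (x, z) * prob μ (fun ω => (Y ω, Z ω)) (y, z)
          / prob μ Z z else 0) = prob μ Z z := by
    intro z
    by_cases hz : 0 < prob μ Z z
    · simp only [if_pos hz]
      have inner : ∀ x, ∑ y, prob μ (fun ω => (X ω, Z ω)) (x, z)
          * prob μ (fun ω => (Y ω, Z ω)) (y, z) / prob μ Z z
          = prob μ (fun ω => (X ω, Z ω)) (x, z) := by
        intro x
        calc ∑ y, prob μ (fun ω => (X ω, Z ω)) (x, z)
              * prob μ (fun ω => (Y ω, Z ω)) (y, z) / prob μ Z z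
            = (∑ y, prob μ (fun ω => (Y ω, Z ω)) (y, z))
              * (prob μ (fun ω => (X ω, Z ω)) (x, z) / prob μ Z z) := by
              rw [Finset.sum_mul]; exact Finset.sum_congr rfl fun y _ => by ring
          _ = prob μ Z z * (prob μ (fun ω => (X ω, Z ω)) (x, z) / prob μ Z z) := by
              rw [marg_pair μ Y Z z]
          _ = prob μ (fun ω => (X ω, Z ω)) (x, z) := by field_simp
      rw [show (∑ x, ∑ y, prob μ (fun ω => (X ω, Z ω)) (x, z)
          * prob μ (fun ω => (Y ω, Z ω)) (y, z) / prob μ Z z)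
          = ∑ x, prob μ (fun ω => (X ω, Z ω)) (x, z) from
        Finset.sum_congr rfl fun x _ => inner x, marg_pair μ X Z z]
    · have hz0 : prob μ Z z = 0 := le_antisymm (not_lt.mp hz) (prob_nonneg μ hpos Z z)
      simp [hz, hz0]
  have hpoint : ∀ z x y, prob μ (fun ω => (X ω, Y ω, Z ω)) (x, y, z)
      - (if 0 < prob μ Z z then prob μ (fun ω => (X ω, Z ω)) (x, z)
          * prob μ (fun ω => (Y ω, Z ω)) (y, z) / prob μ Z z else 0)
      ≤ prob μ (fun ω => (X ω, Y ω, Z ω)) (x, y, z) *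
        (Real.log (prob μ (fun ω => (X ω, Y ω, Z ω)) (x, y, z))
          + Real.log (prob μ Z z)
          - Real.log (prob μ (fun ω => (X ω, Z ω)) (x, z))
          - Real.log (prob μ (fun ω => (Y ω, Z ω)) (y, z))) := by
    intro z x y
    have ha : 0 ≤ prob μ (fun ω => (X ω, Y ω, Z ω)) (x, y, z) :=
      prob_nonneg μ hpos _ _
    have hd0 : 0 ≤ prob μ (fun ω => (X ω, Z ω)) (x, z) := prob_nonneg μ hpos _ _
    have he0 : 0 ≤ prob μ (fun ω => (Y ω, Z ω)) (y, z) := prob_nonneg μ hpos _ _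
    have hc0 : 0 ≤ prob μ Z z := prob_nonneg μ hpos Z z
    have had : prob μ (fun ω => (X ω, Y ω, Z ω)) (x, y, z)
        ≤ prob μ (fun ω => (X ω, Z ω)) (x, z) := by
      rw [← marg_mid μ X Y Z x z]
      exact Finset.single_le_sum (f := fun y' => prob μ (fun ω => (X ω, Y ω, Z ω)) (x, y', z))
        (fun i _ => prob_nonneg μ hpos _ _) (Finset.mem_univ y)
    have hae : prob μ (fun ω => (X ω, Y ω, Z ω)) (x, y, z)
        ≤ prob μ (fun ω => (Y ω, Z ω)) (y, z) := by
      rw [← marg_fst μ X Y Z y z]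
      exact Finset.single_le_sum (f := fun x' => prob μ (fun ω => (X ω, Y ω, Z ω)) (x', y, z))
        (fun i _ => prob_nonneg μ hpos _ _) (Finset.mem_univ x)
    have hdc : prob μ (fun ω => (X ω, Z ω)) (x, z) ≤ prob μ Z z := by
      rw [← marg_pair μ X Z z]
      exact Finset.single_le_sum (f := fun x' => prob μ (fun ω => (X ω, Z ω)) (x', z))
        (fun i _ => prob_nonneg μ hpos _ _) (Finset.mem_univ x)
    rcases ha.eq_or_lt with h0 | h0
    · have hG : (0:ℝ) ≤ if 0 < prob μ Z z then prob μ (fun ω => (X ω, Z ω)) (x, z)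
          * prob μ (fun ω => (Y ω, Z ω)) (y, z) / prob μ Z z else 0 := by
        split
        · exact div_nonneg (mul_nonneg hd0 he0) hc0
        · exact le_refl 0
      rw [← h0]
      simpa using hG
    · have hd : 0 < prob μ (fun ω => (X ω, Z ω)) (x, z) := lt_of_lt_of_le h0 had
      have he : 0 < prob μ (fun ω => (Y ω, Z ω)) (y, z) := lt_of_lt_of_le h0 hae
      have hc : 0 < prob μ Z z := lt_of_lt_of_le h0 (had.trans hdc)
      rw [if_pos hc]
      set a := prob μ (fun ω => (X ω, Y ω, Z ω)) (x, y, z)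
      set c := prob μ Z z
      set d := prob μ (fun ω => (X ω, Z ω)) (x, z)
      set e := prob μ (fun ω => (Y ω, Z ω)) (y, z)
      have hr : 0 < d * e / (a * c) := by positivity
      have hlog := Real.log_le_sub_one_of_pos hr
      have hexp : Real.log (d * e / (a * c))
          = Real.log d + Real.log e - Real.log a - Real.log c := by
        rw [Real.log_div (by positivity) (by positivity), Real.log_mul hd.ne' he.ne',
          Real.log_mul h0.ne' hc.ne']
        ring
      have hmul : a * (d * e / (a * c)) = d * e / c := by field_simp
      have h5 : a * Real.log (d * e / (a * c)) ≤ d * e / c - a := by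
        calc a * Real.log (d * e / (a * c)) ≤ a * (d * e / (a * c) - 1) :=
              mul_le_mul_of_nonneg_left hlog h0.le
          _ = d * e / c - a := by rw [mul_sub, hmul]; ring
      have h6 : a * (Real.log a + Real.log c - Real.log d - Real.log e)
          = -(a * Real.log (d * e / (a * c))) := by rw [hexp]; ring
      linarith
  rw [CMI_eq_sum]
  have main : (∑ z, ∑ x, ∑ y, prob μ (fun ω => (X ω, Y ω, Z ω)) (x, y, z))
      - (∑ z, ∑ x, ∑ y, if 0 < prob μ Z z then prob μ (fun ω => (X ω, Z ω)) (x, z)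
          * prob μ (fun ω => (Y ω, Z ω)) (y, z) / prob μ Z z else 0)
      ≤ ∑ z, ∑ x, ∑ y,
      prob μ (fun ω => (X ω, Y ω, Z ω)) (x, y, z) *
        (Real.log (prob μ (fun ω => (X ω, Y ω, Z ω)) (x, y, z))
          + Real.log (prob μ Z z)
          - Real.log (prob μ (fun ω => (X ω, Z ω)) (x, z))
          - Real.log (prob μ (fun ω => (Y ω, Z ω)) (y, z))) := by
    rw [← Finset.sum_sub_distrib]
    apply Finset.sum_le_sum
    intro z _
    rw [← Finset.sum_sub_distrib]
    apply Finset.sum_le_sum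
    intro x _
    rw [← Finset.sum_sub_distrib]
    apply Finset.sum_le_sum
    intro y _
    exact hpoint z x y
  have hA : ∑ z, ∑ x, ∑ y, prob μ (fun ω => (X ω, Y ω, Z ω)) (x, y, z) = 1 := by
    rw [Finset.sum_congr rfl fun z _ => h1 z, hZsum]
  have hB : (∑ z, ∑ x, ∑ y, if 0 < prob μ Z z then prob μ (fun ω => (X ω, Z ω)) (x, z)
      * prob μ (fun ω => (Y ω, Z ω)) (y, z) / prob μ Z z else 0) = 1 := by
    rw [Finset.sum_congr rfl fun z _ => h2 z, hZsum]
  linarith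

lemma CMI_markov (hpos : ∀ ω, 0 ≤ μ ω) (X : Ω → A) (Y : Ω → B) (Z : Ω → C)
    (h : Markov μ X Z Y) : CMI μ X Y Z = 0 := by
  rw [CMI_eq_sum]
  refine Finset.sum_eq_zero fun z _ => Finset.sum_eq_zero fun x _ =>
    Finset.sum_eq_zero fun y _ => ?_
  have hperm : prob μ (fun ω => (X ω, Z ω, Y ω)) (x, z, y)
      = prob μ (fun ω => (X ω, Y ω, Z ω)) (x, y, z) :=
    prob_comp_inj μ (fun p : A × B × C => (p.1, p.2.2, p.2.1))
      (by intro ⟨a, b, c⟩ ⟨d, e, f⟩ hh; simp_all [Prod.ext_iff])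
      (fun ω => (X ω, Y ω, Z ω)) (x, y, z)
  have hswap : prob μ (fun ω => (Z ω, Y ω)) (z, y)
      = prob μ (fun ω => (Y ω, Z ω)) (y, z) :=
    prob_comp_inj μ (fun p : B × C => (p.2, p.1))
      (by intro ⟨a, b⟩ ⟨c, d⟩ hh; simp_all [Prod.ext_iff])
      (fun ω => (Y ω, Z ω)) (y, z)
  have hm := h x z y
  rw [hperm, hswap] at hm
  rcases (prob_nonneg μ hpos (fun ω => (X ω, Y ω, Z ω)) (x, y, z)).eq_or_lt with h0 | h0
  · rw [← h0]; ring
  · have had : prob μ (fun ω => (X ω, Y ω, Z ω)) (x, y, z)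
        ≤ prob μ (fun ω => (X ω, Z ω)) (x, z) := by
      rw [← marg_mid μ X Y Z x z]
      exact Finset.single_le_sum (f := fun y' => prob μ (fun ω => (X ω, Y ω, Z ω)) (x, y', z))
        (fun i _ => prob_nonneg μ hpos _ _) (Finset.mem_univ y)
    have hae : prob μ (fun ω => (X ω, Y ω, Z ω)) (x, y, z)
        ≤ prob μ (fun ω => (Y ω, Z ω)) (y, z) := by
      rw [← marg_fst μ X Y Z y z]
      exact Finset.single_le_sum (f := fun x' => prob μ (fun ω => (X ω, Y ω, Z ω)) (x', y, z))
        (fun i _ => prob_nonneg μ hpos _ _) (Finset.mem_univ x)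
    have hdc : prob μ (fun ω => (X ω, Z ω)) (x, z) ≤ prob μ Z z := by
      rw [← marg_pair μ X Z z]
      exact Finset.single_le_sum (f := fun x' => prob μ (fun ω => (X ω, Z ω)) (x', z))
        (fun i _ => prob_nonneg μ hpos _ _) (Finset.mem_univ x)
    have hd : 0 < prob μ (fun ω => (X ω, Z ω)) (x, z) := lt_of_lt_of_le h0 had
    have he : 0 < prob μ (fun ω => (Y ω, Z ω)) (y, z) := lt_of_lt_of_le h0 hae
    have hc : 0 < prob μ Z z := lt_of_lt_of_le h0 (had.trans hdc)
    have hlogs : Real.log (prob μ (fun ω => (X ω, Y ω, Z ω)) (x, y, z))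
        + Real.log (prob μ Z z)
        = Real.log (prob μ (fun ω => (X ω, Z ω)) (x, z))
          + Real.log (prob μ (fun ω => (Y ω, Z ω)) (y, z)) := by
      rw [← Real.log_mul h0.ne' hc.ne', hm, Real.log_mul hd.ne' he.ne']
    rw [show Real.log (prob μ (fun ω => (X ω, Y ω, Z ω)) (x, y, z))
        + Real.log (prob μ Z z)
        - Real.log (prob μ (fun ω => (X ω, Z ω)) (x, z))
        - Real.log (prob μ (fun ω => (Y ω, Z ω)) (y, z)) = 0 from by
      rw [hlogs]; ring, mul_zero]

end Aux

/-- Under the Markov structure `U₁ → U₂ → (U₃,X)`, `U₁ → U₃ → (U₂,X)`,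
`(U₁,U₂,U₃) → X → (Y₁,Y₂,Y₃)`:
`I(U₂;Y₂|U₁) + I(U₃;Y₃) − I(U₂;U₃|U₁) ≤ I(U₃;Y₃) + I(X;Y₂|U₃)`. -/
theorem marton_sum_rate_bound {Ω : Type*} [Fintype Ω]
    {𝒰₁ 𝒰₂ 𝒰₃ 𝒳 𝒴₁ 𝒴₂ 𝒴₃ : Type*}
    [Fintype 𝒰₁] [DecidableEq 𝒰₁] [Fintype 𝒰₂] [DecidableEq 𝒰₂]
    [Fintype 𝒰₃] [DecidableEq 𝒰₃] [Fintype 𝒳] [DecidableEq 𝒳]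
    [Fintype 𝒴₁] [DecidableEq 𝒴₁] [Fintype 𝒴₂] [DecidableEq 𝒴₂]
    [Fintype 𝒴₃] [DecidableEq 𝒴₃]
    (μ : Ω → ℝ) (hμ : IsProbMeasure μ)
    (U₁ : Ω → 𝒰₁) (U₂ : Ω → 𝒰₂) (U₃ : Ω → 𝒰₃) (X : Ω → 𝒳)
    (Y₁ : Ω → 𝒴₁) (Y₂ : Ω → 𝒴₂) (Y₃ : Ω → 𝒴₃)
    (h₂ : Markov μ U₁ U₂ (fun ω => (U₃ ω, X ω)))
    (h₃ : Markov μ U₁ U₃ (fun ω => (U₂ ω, X ω)))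
    (hCh : Markov μ (fun ω => (U₁ ω, U₂ ω, U₃ ω)) X
      (fun ω => (Y₁ ω, Y₂ ω, Y₃ ω))) :
    CMI μ U₂ Y₂ U₁ + MI μ U₃ Y₃ - CMI μ U₂ U₃ U₁
      ≤ MI μ U₃ Y₃ + CMI μ X Y₂ U₃ := by
  -- Step A : I(U₂;Y₂|U₁) - I(U₂;U₃|U₁) ≤ I(U₂;Y₂|U₃,U₁)
  have s1 : CMI μ U₂ (fun ω => (Y₂ ω, U₃ ω)) U₁
      = CMI μ U₂ U₃ U₁ + CMI μ U₂ Y₂ (fun ω => (U₃ ω, U₁ ω)) :=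
    CMI_chain μ U₂ Y₂ U₃ U₁
  have s2 : CMI μ U₂ (fun ω => (U₃ ω, Y₂ ω)) U₁
      = CMI μ U₂ Y₂ U₁ + CMI μ U₂ U₃ (fun ω => (Y₂ ω, U₁ ω)) :=
    CMI_chain μ U₂ U₃ Y₂ U₁
  have s3 : CMI μ U₂ (fun ω => (Y₂ ω, U₃ ω)) U₁ = CMI μ U₂ (fun ω => (U₃ ω, Y₂ ω)) U₁ :=
    CMI_congr μ id Prod.swap id Function.injective_id Prod.swap_injective
      Function.injective_id (fun _ => rfl) (fun _ => rfl) (fun _ => rfl)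
  have n1 : 0 ≤ CMI μ U₂ U₃ (fun ω => (Y₂ ω, U₁ ω)) := CMI_nonneg μ hμ _ _ _
  -- Step B : I(U₂;Y₂|U₃,U₁) ≤ I((U₂,U₁);Y₂|U₃)
  have t1 : CMI μ Y₂ (fun ω => (U₂ ω, U₁ ω)) U₃
      = CMI μ Y₂ U₁ U₃ + CMI μ Y₂ U₂ (fun ω => (U₁ ω, U₃ ω)) :=
    CMI_chain μ Y₂ U₂ U₁ U₃
  have t2 : CMI μ U₂ Y₂ (fun ω => (U₃ ω, U₁ ω)) = CMI μ Y₂ U₂ (fun ω => (U₁ ω, U₃ ω)) :=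
    (CMI_symm μ U₂ Y₂ (fun ω => (U₃ ω, U₁ ω))).trans
      (CMI_congr μ id id Prod.swap Function.injective_id Function.injective_id
        Prod.swap_injective (fun _ => rfl) (fun _ => rfl) (fun _ => rfl))
  have n2 : 0 ≤ CMI μ Y₂ U₁ U₃ := CMI_nonneg μ hμ _ _ _
  -- Step C : I((U₂,U₁);Y₂|U₃) ≤ I(X;Y₂|U₃) + I((U₂,U₁);Y₂|X,U₃)
  have u1 : CMI μ Y₂ (fun ω => ((U₂ ω, U₁ ω), X ω)) U₃
      = CMI μ Y₂ X U₃ + CMI μ Y₂ (fun ω => (U₂ ω, U₁ ω)) (fun ω => (X ω, U₃ ω)) :=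
    CMI_chain μ Y₂ (fun ω => (U₂ ω, U₁ ω)) X U₃
  have u2 : CMI μ Y₂ (fun ω => (X ω, (U₂ ω, U₁ ω))) U₃
      = CMI μ Y₂ (fun ω => (U₂ ω, U₁ ω)) U₃
        + CMI μ Y₂ X (fun ω => ((U₂ ω, U₁ ω), U₃ ω)) :=
    CMI_chain μ Y₂ X (fun ω => (U₂ ω, U₁ ω)) U₃
  have u3 : CMI μ Y₂ (fun ω => ((U₂ ω, U₁ ω), X ω)) U₃
      = CMI μ Y₂ (fun ω => (X ω, (U₂ ω, U₁ ω))) U₃ :=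
    CMI_congr μ id Prod.swap id Function.injective_id Prod.swap_injective
      Function.injective_id (fun _ => rfl) (fun _ => rfl) (fun _ => rfl)
  have n3 : 0 ≤ CMI μ Y₂ X (fun ω => ((U₂ ω, U₁ ω), U₃ ω)) := CMI_nonneg μ hμ _ _ _
  -- Step D : I((U₂,U₁);Y₂|X,U₃) ≤ 0 from the channel Markov chain
  have d0 : CMI μ (fun ω => (U₁ ω, U₂ ω, U₃ ω)) (fun ω => (Y₁ ω, Y₂ ω, Y₃ ω)) X = 0 :=
    CMI_markov μ hμ.1 _ _ _ hCh
  have d0' : CMI μ (fun ω => (Y₁ ω, Y₂ ω, Y₃ ω)) (fun ω => (U₁ ω, U₂ ω, U₃ ω)) X = 0 :=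
    (CMI_symm μ (fun ω => (Y₁ ω, Y₂ ω, Y₃ ω)) (fun ω => (U₁ ω, U₂ ω, U₃ ω)) X).trans d0
  have d2 : CMI μ (fun ω => (Y₁ ω, Y₂ ω, Y₃ ω)) (fun ω => (U₁ ω, U₂ ω, U₃ ω)) X
      = CMI μ (fun ω => (Y₁ ω, Y₂ ω, Y₃ ω)) (fun ω => ((U₂ ω, U₁ ω), U₃ ω)) X :=
    (CMI_congr μ id (fun p : (𝒰₂ × 𝒰₁) × 𝒰₃ => (p.1.2, p.1.1, p.2)) id
      Function.injective_id
      (by intro ⟨⟨a, b⟩, c⟩ ⟨⟨d, e⟩, f⟩ hh; simp_all [Prod.ext_iff])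
      Function.injective_id (fun _ => rfl) (fun _ => rfl) (fun _ => rfl))
  have d1 : CMI μ (fun ω => (Y₁ ω, Y₂ ω, Y₃ ω)) (fun ω => ((U₂ ω, U₁ ω), U₃ ω)) X
      = CMI μ (fun ω => (Y₁ ω, Y₂ ω, Y₃ ω)) U₃ X
        + CMI μ (fun ω => (Y₁ ω, Y₂ ω, Y₃ ω)) (fun ω => (U₂ ω, U₁ ω))
            (fun ω => (U₃ ω, X ω)) :=
    CMI_chain μ (fun ω => (Y₁ ω, Y₂ ω, Y₃ ω)) (fun ω => (U₂ ω, U₁ ω)) U₃ X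
  have n4 : 0 ≤ CMI μ (fun ω => (Y₁ ω, Y₂ ω, Y₃ ω)) U₃ X := CMI_nonneg μ hμ _ _ _
  have d5 : CMI μ (fun ω => (Y₁ ω, Y₂ ω, Y₃ ω)) (fun ω => (U₂ ω, U₁ ω)) (fun ω => (U₃ ω, X ω))
      = CMI μ (fun ω => (U₂ ω, U₁ ω)) (fun ω => (Y₁ ω, Y₂ ω, Y₃ ω)) (fun ω => (U₃ ω, X ω)) :=
    CMI_symm μ _ _ _
  have d4 : CMI μ (fun ω => (U₂ ω, U₁ ω)) (fun ω => (Y₁ ω, Y₂ ω, Y₃ ω)) (fun ω => (U₃ ω, X ω))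
      = CMI μ (fun ω => (U₂ ω, U₁ ω)) (fun ω => ((Y₁ ω, Y₃ ω), Y₂ ω)) (fun ω => (U₃ ω, X ω)) :=
    (CMI_congr μ id (fun p : (𝒴₁ × 𝒴₃) × 𝒴₂ => (p.1.1, p.2, p.1.2)) id
      Function.injective_id
      (by intro ⟨⟨a, b⟩, c⟩ ⟨⟨d, e⟩, f⟩ hh; simp_all [Prod.ext_iff])
      Function.injective_id (fun _ => rfl) (fun _ => rfl) (fun _ => rfl))
  have d3 : CMI μ (fun ω => (U₂ ω, U₁ ω)) (fun ω => ((Y₁ ω, Y₃ ω), Y₂ ω)) (fun ω => (U₃ ω, X ω))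
      = CMI μ (fun ω => (U₂ ω, U₁ ω)) Y₂ (fun ω => (U₃ ω, X ω))
        + CMI μ (fun ω => (U₂ ω, U₁ ω)) (fun ω => (Y₁ ω, Y₃ ω))
            (fun ω => (Y₂ ω, (U₃ ω, X ω))) :=
    CMI_chain μ (fun ω => (U₂ ω, U₁ ω)) (fun ω => (Y₁ ω, Y₃ ω)) Y₂ (fun ω => (U₃ ω, X ω))
  have n5 : 0 ≤ CMI μ (fun ω => (U₂ ω, U₁ ω)) (fun ω => (Y₁ ω, Y₃ ω))
      (fun ω => (Y₂ ω, (U₃ ω, X ω))) := CMI_nonneg μ hμ _ _ _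
  have d6 : CMI μ (fun ω => (U₂ ω, U₁ ω)) Y₂ (fun ω => (U₃ ω, X ω))
      = CMI μ Y₂ (fun ω => (U₂ ω, U₁ ω)) (fun ω => (X ω, U₃ ω)) :=
    (CMI_symm μ (fun ω => (U₂ ω, U₁ ω)) Y₂ (fun ω => (U₃ ω, X ω))).trans
      (CMI_congr μ id id Prod.swap Function.injective_id Function.injective_id
        Prod.swap_injective (fun _ => rfl) (fun _ => rfl) (fun _ => rfl))
  have fin : CMI μ Y₂ X U₃ = CMI μ X Y₂ U₃ := CMI_symm μ Y₂ X U₃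
  linarith
end

section
/- Projection identity for the Marton-type inner bound: nonnegative reals (R₀, R₁) admit nonnegative S₁, S₂, S₃ with R₁ = S₁ + S₂ + S₃ satisfying R₀ + S₂ ≤ b, R₀ + S₃ ≤ c, 2R₀ + S₂ + S₃ ≤ b + c − a, R₀ + S₁ + S₂ + S₃ ≤ d, S₁ + S₂ + S₃ ≤ e, S₁ + S₂ ≤ f, S₁ + S₃ ≤ g, S₁ ≤ h, if and only if: R₀ ≤ min(b, c), 2R₀ ≤ b + c − a, R₁ ≤ min(f + g, e), R₀ + R₁ ≤ min(d, b + g, c + f), 2R₀ + R₁ ≤ b + c + h − a, and 2R₀ + 2R₁ ≤ b + g + c + f − a. -/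
/-- Correctness of the Fourier–Motzkin elimination producing the inner bound of
Proposition 4.  The constants `a,…,h` stand for `I(U₂;U₃|U₁)`, `I(U₂;Y₂)`,
`I(U₃;Y₃)`, `I(X;Y₁)`, `I(X;Y₁|U₁)`, `I(X;Y₁|U₃)`, `I(X;Y₁|U₂)`,
`I(X;Y₁|U₂,U₃)` respectively. -/
theorem fourier_motzkin_inner_bound (a b c d e f g h R₀ R₁ : ℝ)
    (ha : 0 ≤ a) (hb : 0 ≤ b) (hc : 0 ≤ c) (hd : 0 ≤ d) (he : 0 ≤ e)
    (hf : 0 ≤ f) (hg : 0 ≤ g) (hh : 0 ≤ h)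
    (hhf : h ≤ f) (hfe : f ≤ e) (hhg : h ≤ g) (hge : g ≤ e) (hed : e ≤ d)
    (hR0 : 0 ≤ R₀) (hR1 : 0 ≤ R₁) :
    (∃ S₁ S₂ S₃ : ℝ, 0 ≤ S₁ ∧ 0 ≤ S₂ ∧ 0 ≤ S₃ ∧ R₁ = S₁ + S₂ + S₃ ∧
      R₀ + S₂ ≤ b ∧ R₀ + S₃ ≤ c ∧ 2*R₀ + S₂ + S₃ ≤ b + c - a ∧
      R₀ + S₁ + S₂ + S₃ ≤ d ∧ S₁ + S₂ + S₃ ≤ e ∧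
      S₁ + S₂ ≤ f ∧ S₁ + S₃ ≤ g ∧ S₁ ≤ h)
    ↔ (R₀ ≤ min b c ∧ 2*R₀ ≤ b + c - a ∧ R₁ ≤ min (f + g) e ∧
       R₀ + R₁ ≤ min d (min (b + g) (c + f)) ∧
       2*R₀ + R₁ ≤ b + c + h - a ∧
       2*R₀ + 2*R₁ ≤ b + g + c + f - a) := by
  constructor
  · rintro ⟨S₁, S₂, S₃, h1, h2, h3, h4, h5, h6, h7, h8, h9, h10, h11, h12⟩
    refine ⟨le_min (by linarith) (by linarith), by linarith,
      le_min (by linarith) (by linarith),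
      le_min (by linarith) (le_min (by linarith) (by linarith)),
      by linarith, by linarith⟩
  · rintro ⟨h1, h2, h3, h4, h5, h6⟩
    rw [le_min_iff] at h1 h3 h4
    rw [le_min_iff] at h4
    obtain ⟨h1b, h1c⟩ := h1
    obtain ⟨h3fg, h3e⟩ := h3
    obtain ⟨h4d, h4bg, h4cf⟩ := h4
    set S₁ : ℝ := max (R₁ - (b + c - a - 2*R₀)) 0 with hS₁
    have hS₁0 : 0 ≤ S₁ := le_max_right _ _
    have hS₁h : S₁ ≤ h := max_le (by linarith) hh
    have hS₁R : S₁ ≤ R₁ := max_le (by linarith) hR1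
    have hS₁C : R₁ - S₁ ≤ b + c - a - 2*R₀ := by
      have := le_max_left (R₁ - (b + c - a - 2*R₀)) 0
      linarith
    have hS₁fg : S₁ ≤ f + g - R₁ := by
      apply max_le
      · linarith
      · linarith
    set A : ℝ := min (f - S₁) (b - R₀) with hA
    have hA0 : 0 ≤ A := le_min (by linarith) (by linarith)
    set S₂ : ℝ := min (R₁ - S₁) A with hS₂
    set S₃ : ℝ := R₁ - S₁ - S₂ with hS₃
    have hS₂0 : 0 ≤ S₂ := le_min (by linarith) hA0
    have hS₂A : S₂ ≤ A := min_le_right _ _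
    have hS₂f : S₂ ≤ f - S₁ := le_trans hS₂A (min_le_left _ _)
    have hS₂b : S₂ ≤ b - R₀ := le_trans hS₂A (min_le_right _ _)
    have hS₃0 : 0 ≤ S₃ := by
      have := min_le_left (R₁ - S₁) A
      simp only [hS₃]; linarith
    have hS₃B : S₃ ≤ min (g - S₁) (c - R₀) := by
      rcases le_total (R₁ - S₁) A with hle | hle
      · have : S₂ = R₁ - S₁ := min_eq_left hle
        have : S₃ = 0 := by simp [hS₃, this]
        rw [this]
        exact le_min (by linarith) (by linarith)
      · have hS2A : S₂ = A := min_eq_right hle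
        have : S₃ = R₁ - S₁ - A := by rw [hS₃, hS2A]
        rw [this]
        apply le_min
        · rcases le_total (f - S₁) (b - R₀) with h' | h'
          · have : A = f - S₁ := min_eq_left h'
            rw [this]; linarith
          · have : A = b - R₀ := min_eq_right h'
            rw [this]; linarith
        · rcases le_total (f - S₁) (b - R₀) with h' | h'
          · have : A = f - S₁ := min_eq_left h'
            rw [this]; linarith
          · have : A = b - R₀ := min_eq_right h'
            rw [this]; linarith
    have hS₃g : S₃ ≤ g - S₁ := le_trans hS₃B (min_le_left _ _)
    have hS₃c : S₃ ≤ c - R₀ := le_trans hS₃B (min_le_right _ _)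
    exact ⟨S₁, S₂, S₃, hS₁0, hS₂0, hS₃0, by rw [hS₃]; ring,
      by linarith, by linarith, by linarith, by linarith, by linarith,
      by linarith, by linarith, hS₁h⟩
end
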